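/- The noncommutative Boussinesq-type map Y₂ is noninvolutive: there exist inputs with a ≠ b for which Y₂(Y₂(x,y)) ≠ (x,y). Specifically, the fourth coordinate of the first component of Y₂∘Y₂ equals x₄ + (a-b)y₃D⁻¹ with D = y₄ - x₁ - x₂y₃, which differs from x₄ whenever a ≠ b and y₃ ≠ 0. -/
import Mathlib


/-- The noncommutative Boussinesq-type map `Y₂` on `R⁴ × R⁴`,
`((x₁,x₂,x₃,x₄),(y₁,y₂,y₃,y₄)) ↦ ((u₁,u₂,u₃,u₄),(v₁,v₂,v₃,v₄))`, where
`D = y₄ - x₁ - x₂y₃`. -/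
def Y2 {R : Type*} [DivisionRing R] (a b : R)
    (p : (R × R × R × R) × (R × R × R × R)) : (R × R × R × R) × (R × R × R × R) :=
  let x := p.1; let y := p.2
  let D := y.2.2.2 - x.1 - x.2.1 * y.2.2.1
  ((y.1 - (a - b) * D⁻¹ * x.2.1,
    y.2.1 + (a - b) * D⁻¹,
    y.2.2.1,
    y.2.2.2),
   (x.1,
    x.2.1,
    x.2.2.1 + (a - b) * D⁻¹,
    x.2.2.2 + (a - b) * y.2.2.1 * D⁻¹))

/-- `Y₂` is noninvolutive: the fourth coordinate of the first component of
`Y₂ ∘ Y₂` equals `x₄ + (a-b) y₃ D⁻¹` with `D = y₄ - x₁ - x₂y₃`, which differs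
from `x₄` whenever `a ≠ b` and `y₃ ≠ 0`; in particular `Y₂(Y₂(x,y)) ≠ (x,y)`. -/
theorem Y2_noninvolutive {R : Type*} [DivisionRing R] (a b : R)
    (ha : ∀ r : R, a * r = r * a) (hb : ∀ r : R, b * r = r * b)
    (x y : R × R × R × R)
    (hD : y.2.2.2 - x.1 - x.2.1 * y.2.2.1 ≠ 0)
    (hab : a ≠ b) (hy3 : y.2.2.1 ≠ 0) :
    (Y2 a b (Y2 a b (x, y))).1.2.2.2
        = x.2.2.2 + (a - b) * y.2.2.1 * (y.2.2.2 - x.1 - x.2.1 * y.2.2.1)⁻¹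
      ∧ (Y2 a b (Y2 a b (x, y))).1.2.2.2 ≠ x.2.2.2
      ∧ Y2 a b (Y2 a b (x, y)) ≠ (x, y) := by
  have h1 : (Y2 a b (Y2 a b (x, y))).1.2.2.2
      = x.2.2.2 + (a - b) * y.2.2.1 * (y.2.2.2 - x.1 - x.2.1 * y.2.2.1)⁻¹ := by
    simp [Y2]
  have hne : (a - b) * y.2.2.1 * (y.2.2.2 - x.1 - x.2.1 * y.2.2.1)⁻¹ ≠ 0 := by
    apply mul_ne_zero (mul_ne_zero (sub_ne_zero.mpr hab) hy3)
    exact inv_ne_zero hD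
  have h2 : (Y2 a b (Y2 a b (x, y))).1.2.2.2 ≠ x.2.2.2 := by
    rw [h1]
    intro h
    exact hne (add_eq_left.mp h)
  refine ⟨h1, h2, fun h => h2 ?_⟩
  rw [h]
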